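/- Suppose f : ℕⁿ → K satisfies the difference equation Σ_{0 ≤ α ≤ m} c_α f(x+α) = 0 for every x ∈ ℕⁿ. For each τ ∈ ℕⁿ define the polynomial P̃_τ = Σ_{α ≤ m, ¬(α ≤ τ)} c_α · w^{m−α}. Then in K⟦w₁,…,wₙ⟧ one has Q · G = Σ_{τ ∈ X₀} f(τ) · w^{τ+I} · P̃_τ, where the sum on the right is a summable family of formal power series. -/

import Mathlib

private lemma finsupp_pt_le {n : ℕ} (a b : Fin n →₀ ℕ) :
    a ≤ b ↔ ∀ j, a j ≤ b j := Finsupp.le_def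


/-- Formula (8) of Theorem 1: if `f : ℕⁿ → K` satisfies the difference equation
`Σ_{0 ≤ α ≤ m} c_α f(x+α) = 0`, then for the generating series `G = Σ_x f(x) w^{x+I}`
and `Q = Σ_{α ≤ m} c_α w^{m-α}` one has
`Q·G = Σ_{τ ∈ X₀} f(τ) · w^{τ+I} · P̃_τ`, where
`P̃_τ = Σ_{α ≤ m, ¬(α ≤ τ)} c_α w^{m−α}` and the sum over `X₀` is a summable family
of formal power series (for the coefficientwise, i.e. product of discrete, topology). -/
theorem generating_series_formula_four
    (n : ℕ) (hn : 1 ≤ n) (K : Type*) [Field K]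
    (m : Fin n →₀ ℕ) (c : (Fin n →₀ ℕ) → K) (f : (Fin n →₀ ℕ) → K)
    (hf : ∀ x : Fin n →₀ ℕ, ∑ α ∈ Finset.Iic m, c α * f (x + α) = 0)
    (I : Fin n →₀ ℕ) (hI : ∀ j, I j = 1)
    (G : MvPowerSeries (Fin n) K)
    (hG : ∀ e : Fin n →₀ ℕ,
      MvPowerSeries.coeff e G = if I ≤ e then f (e - I) else 0)
    (Q : MvPowerSeries (Fin n) K)
    (hQ : Q = ∑ α ∈ Finset.Iic m, (MvPowerSeries.monomial (m - α)) (c α)) :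
    let _inst : TopologicalSpace (MvPowerSeries (Fin n) K) :=
      @Pi.topologicalSpace (Fin n →₀ ℕ) (fun _ => K) (fun _ => ⊥)
    HasSum (fun τ : {x : Fin n →₀ ℕ // ¬ m ≤ x} =>
        (MvPowerSeries.monomial ((τ : Fin n →₀ ℕ) + I)) (f τ) *
          ∑ α ∈ (Finset.Iic m).filter (fun α => ¬ α ≤ (τ : Fin n →₀ ℕ)),
            (MvPowerSeries.monomial (m - α)) (c α))
      (Q * G) := by
  intro _inst
  classical
  letI : TopologicalSpace K := ⊥
  refine Pi.hasSum.mpr ?_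
  intro e
  -- the relevant finite index set
  set s : Finset {x : Fin n →₀ ℕ // ¬ m ≤ x} :=
    (Finset.Iic e).subtype (fun x => ¬ m ≤ x) with hs
  -- the summand, coefficientwise
  set F : {x : Fin n →₀ ℕ // ¬ m ≤ x} → K := fun τ =>
      MvPowerSeries.coeff e
        ((MvPowerSeries.monomial ((τ : Fin n →₀ ℕ) + I)) (f τ) *
          ∑ α ∈ (Finset.Iic m).filter (fun α => ¬ α ≤ (τ : Fin n →₀ ℕ)),
            (MvPowerSeries.monomial (m - α)) (c α)) with hF
  -- vanishing off s
  have hvan : ∀ τ ∉ s, F τ = 0 := by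
    intro τ hτ
    have hτe : ¬ (τ : Fin n →₀ ℕ) ≤ e := by
      simpa [hs, Finset.mem_subtype, Finset.mem_Iic] using hτ
    show MvPowerSeries.coeff e _ = 0
    rw [MvPowerSeries.coeff_monomial_mul, if_neg]
    intro hle
    exact hτe (le_trans (le_add_right le_rfl) hle)
  have hsum : HasSum F (∑ τ ∈ s, F τ) := hasSum_sum_of_ne_finset_zero hvan
  -- the main identity
  have main : ∑ τ ∈ s, F τ = MvPowerSeries.coeff e (Q * G) := by
    -- compute LHS of `main`
    have hterm : ∀ τ : {x : Fin n →₀ ℕ // ¬ m ≤ x}, F τ =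
        ∑ α ∈ Finset.Iic m, if ¬ α ≤ (τ : Fin n →₀ ℕ) ∧
            e = ((τ : Fin n →₀ ℕ) + I) + (m - α) then f τ * c α else 0 := by
      intro τ
      show MvPowerSeries.coeff e _ = _
      rw [Finset.mul_sum, map_sum]
      rw [Finset.sum_filter]
      refine Finset.sum_congr rfl fun α hα => ?_
      rw [MvPowerSeries.monomial_mul_monomial, MvPowerSeries.coeff_monomial]
      by_cases h1 : (α : Fin n →₀ ℕ) ≤ (τ : Fin n →₀ ℕ) <;>
        by_cases h2 : e = ((τ : Fin n →₀ ℕ) + I) + (m - α) <;>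
        simp [h1, h2]
    calc ∑ τ ∈ s, F τ
        = ∑ α ∈ Finset.Iic m, ∑ τ ∈ s, (if ¬ α ≤ (τ : Fin n →₀ ℕ) ∧
            e = ((τ : Fin n →₀ ℕ) + I) + (m - α) then f τ * c α else 0) := by
          rw [Finset.sum_congr rfl fun τ _ => hterm τ, Finset.sum_comm]
      _ = ∑ α ∈ Finset.Iic m, if m - α + I ≤ e ∧ ¬ α ≤ e - (m - α + I)
            then c α * f (e - (m - α + I)) else 0 := by
          refine Finset.sum_congr rfl fun α hα => ?_
          have hαm : α ≤ m := Finset.mem_Iic.mp hα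
          by_cases hC : m - α + I ≤ e ∧ ¬ α ≤ e - (m - α + I)
          · have hC1 := hC.1
            have hC2 := hC.2
            have hτ0m : ¬ m ≤ e - (m - α + I) := fun h => hC2 (le_trans hαm h)
            have hτ0e : e - (m - α + I) ≤ e := tsub_le_self
            have hmem : (⟨e - (m - α + I), hτ0m⟩ : {x : Fin n →₀ ℕ // ¬ m ≤ x}) ∈ s := by
              simp [hs, Finset.mem_subtype, Finset.mem_Iic, hτ0e]
            rw [Finset.sum_eq_single (⟨e - (m - α + I), hτ0m⟩ :
                {x : Fin n →₀ ℕ // ¬ m ≤ x})]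
            · have heq : e = (e - (m - α + I) + I) + (m - α) := by
                rw [finsupp_pt_le] at hC1
                ext j
                have := hC1 j
                simp only [Finsupp.tsub_apply, Finsupp.add_apply, hI j] at *
                omega
              rw [if_pos ⟨hC2, heq⟩, if_pos hC, mul_comm]
            · intro τ hτs hτne
              rw [if_neg]
              rintro ⟨h1, h2⟩
              apply hτne
              have : (τ : Fin n →₀ ℕ) = e - (m - α + I) := by
                ext j
                have := DFunLike.congr_fun h2 j
                simp only [Finsupp.tsub_apply, Finsupp.add_apply, hI j] at *
                omega
              exact Subtype.ext this
            · intro h; exact absurd hmem h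
          · rw [if_neg hC]
            refine Finset.sum_eq_zero fun τ hτs => ?_
            rw [if_neg]
            rintro ⟨h1, h2⟩
            apply hC
            have hC1 : m - α + I ≤ e := by
              rw [finsupp_pt_le]
              intro j
              have := DFunLike.congr_fun h2 j
              simp only [Finsupp.tsub_apply, Finsupp.add_apply, hI j] at *
              omega
            have hτ0 : (τ : Fin n →₀ ℕ) = e - (m - α + I) := by
              ext j
              have := DFunLike.congr_fun h2 j
              simp only [Finsupp.tsub_apply, Finsupp.add_apply, hI j] at *
              omega
            exact ⟨hC1, by rwa [← hτ0]⟩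
      _ = MvPowerSeries.coeff e (Q * G) := by
          -- coefficient of Q*G
          have hQG : MvPowerSeries.coeff e (Q * G)
              = ∑ α ∈ Finset.Iic m,
                  if m - α + I ≤ e then c α * f (e - (m - α + I)) else 0 := by
            rw [hQ, Finset.sum_mul, map_sum]
            refine Finset.sum_congr rfl fun α hα => ?_
            rw [MvPowerSeries.coeff_monomial_mul, hG]
            by_cases h1 : m - α ≤ e
            · by_cases h2 : I ≤ e - (m - α)
              · rw [if_pos h1, if_pos h2, if_pos, tsub_tsub]
                rw [finsupp_pt_le] at h1 h2 ⊢
                intro j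
                have := h1 j; have := h2 j
                simp only [Finsupp.tsub_apply, Finsupp.add_apply] at *
                omega
              · rw [if_pos h1, if_neg h2, if_neg, mul_zero]
                rw [finsupp_pt_le] at h1 h2 ⊢
                push_neg at h2 ⊢
                obtain ⟨j, hj⟩ := h2
                refine ⟨j, ?_⟩
                have := h1 j
                simp only [Finsupp.tsub_apply, Finsupp.add_apply] at *
                omega
            · rw [if_neg h1, if_neg]
              rw [finsupp_pt_le] at h1 ⊢
              push_neg at h1 ⊢
              obtain ⟨j, hj⟩ := h1
              exact ⟨j, by simp only [Finsupp.tsub_apply, Finsupp.add_apply] at *; omega⟩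
          rw [hQG]
          -- split each summand according to `α ≤ e - (m - α + I)`
          have split : ∀ α,
              (if m - α + I ≤ e then c α * f (e - (m - α + I)) else 0)
              = (if m - α + I ≤ e ∧ ¬ α ≤ e - (m - α + I)
                  then c α * f (e - (m - α + I)) else 0)
                + (if m - α + I ≤ e ∧ α ≤ e - (m - α + I)
                  then c α * f (e - (m - α + I)) else 0) := by
            intro α
            by_cases h1 : m - α + I ≤ e <;> by_cases h2 : α ≤ e - (m - α + I) <;>
              simp [h1, h2]
          rw [Finset.sum_congr rfl fun α _ => split α, Finset.sum_add_distrib]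
          -- second sum vanishes by the recurrence
          have hzero : ∑ α ∈ Finset.Iic m,
              (if m - α + I ≤ e ∧ α ≤ e - (m - α + I)
                then c α * f (e - (m - α + I)) else 0) = 0 := by
            by_cases hme : m + I ≤ e
            · have : ∀ α ∈ Finset.Iic m,
                  (if m - α + I ≤ e ∧ α ≤ e - (m - α + I)
                    then c α * f (e - (m - α + I)) else 0)
                  = c α * f ((e - (m + I)) + α) := by
                intro α hα
                have hαm : α ≤ m := Finset.mem_Iic.mp hα
                rw [finsupp_pt_le] at hαm hme
                have h1 : m - α + I ≤ e := by
                  rw [finsupp_pt_le]; intro j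
                  have := hαm j; have := hme j
                  simp only [Finsupp.tsub_apply, Finsupp.add_apply, hI j] at *
                  omega
                have h2 : α ≤ e - (m - α + I) := by
                  rw [finsupp_pt_le]; intro j
                  have := hαm j; have := hme j
                  simp only [Finsupp.tsub_apply, Finsupp.add_apply, hI j] at *
                  omega
                have h3 : e - (m - α + I) = (e - (m + I)) + α := by
                  ext j
                  have := hαm j; have := hme j
                  simp only [Finsupp.tsub_apply, Finsupp.add_apply, hI j] at *
                  omega
                rw [if_pos ⟨h1, h2⟩, h3]
              rw [Finset.sum_congr rfl this]
              exact hf (e - (m + I))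
            · refine Finset.sum_eq_zero fun α hα => ?_
              have hαm : α ≤ m := Finset.mem_Iic.mp hα
              rw [if_neg]
              rintro ⟨h1, h2⟩
              apply hme
              rw [finsupp_pt_le] at hαm h1 h2 ⊢
              intro j
              have := hαm j; have := h1 j; have := h2 j
              simp only [Finsupp.tsub_apply, Finsupp.add_apply, hI j] at *
              omega
          rw [hzero, add_zero]
  have goal : HasSum F (MvPowerSeries.coeff e (Q * G)) := main ▸ hsum
  exact goal
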